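/- Subprobability property of the flow of measures: if (μ, m) ∈ R, then m_t(Ō×A) ≤ 1 for Lebesgue-almost every t ∈ [0, T]. -/

import Mathlib

open MeasureTheory Filter Set Topology

noncomputable section

/-- Membership in `C_b^{1,2}([0,T] × closure O)`: `u` together with its partial
derivatives `ut = ∂_t u`, `ux = ∂_x u`, `uxx = ∂_xx u`, all continuous and bounded
on `[0,T] × closure O`. -/
structure IsCb12 (T : ℝ) (O : Set ℝ) (u ut ux uxx : ℝ → ℝ → ℝ) : Prop where
  cont : ContinuousOn (fun p : ℝ × ℝ => u p.1 p.2) (Set.Icc 0 T ×ˢ closure O)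
  cont_t : ContinuousOn (fun p : ℝ × ℝ => ut p.1 p.2) (Set.Icc 0 T ×ˢ closure O)
  cont_x : ContinuousOn (fun p : ℝ × ℝ => ux p.1 p.2) (Set.Icc 0 T ×ˢ closure O)
  cont_xx : ContinuousOn (fun p : ℝ × ℝ => uxx p.1 p.2) (Set.Icc 0 T ×ˢ closure O)
  deriv_t : ∀ t ∈ Set.Icc (0:ℝ) T, ∀ x ∈ closure O,
    HasDerivWithinAt (fun s => u s x) (ut t x) (Set.Icc 0 T) t
  deriv_x : ∀ t ∈ Set.Icc (0:ℝ) T, ∀ x ∈ closure O,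
    HasDerivWithinAt (fun y => u t y) (ux t x) (closure O) x
  deriv_xx : ∀ t ∈ Set.Icc (0:ℝ) T, ∀ x ∈ closure O,
    HasDerivWithinAt (fun y => ux t y) (uxx t x) (closure O) x
  bdd : ∃ C : ℝ, ∀ t ∈ Set.Icc (0:ℝ) T, ∀ x ∈ closure O,
    |u t x| ≤ C ∧ |ut t x| ≤ C ∧ |ux t x| ≤ C ∧ |uxx t x| ≤ C

/-- Membership in `V`: a flow of finite positive Borel measures on
`closure O × A`, measurable in `t`, with integrable total mass on `[0,T]`. -/
def MemV (T : ℝ) (O A : Set ℝ) (m : ℝ → Measure (ℝ × ℝ)) : Prop :=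
  (∀ t, m t Set.univ < ⊤) ∧
  (∀ t, m t ((closure O ×ˢ A)ᶜ) = 0) ∧
  (∀ B : Set (ℝ × ℝ), MeasurableSet B → Measurable fun t => m t B) ∧
  IntegrableOn (fun t => (m t Set.univ).toReal) (Set.Icc 0 T)

/-- Standing assumptions on the coefficients `b` and `σ` (single-agent case):
measurable, bounded, Lipschitz in `x` uniformly in `(t,a)`, nonnegative diffusion,
and jointly continuous in `(x,a)` on `closure O × A` for each fixed `t`. -/
def CoefAssumption (O A : Set ℝ) (b σ : ℝ → ℝ → ℝ → ℝ) : Prop :=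
  Measurable (fun q : ℝ × ℝ × ℝ => b q.1 q.2.1 q.2.2) ∧
  Measurable (fun q : ℝ × ℝ × ℝ => σ q.1 q.2.1 q.2.2) ∧
  (∃ C : ℝ, ∀ t x a, |b t x a| ≤ C ∧ |σ t x a| ≤ C) ∧
  (∀ t x a, 0 ≤ σ t x a) ∧
  (∃ K : ℝ, ∀ t a x y, |b t x a - b t y a| ≤ K * |x - y| ∧ |σ t x a - σ t y a| ≤ K * |x - y|) ∧
  (∀ t, ContinuousOn (fun p : ℝ × ℝ => b t p.1 p.2) (closure O ×ˢ A)) ∧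
  (∀ t, ContinuousOn (fun p : ℝ × ℝ => σ t p.1 p.2) (closure O ×ˢ A))

/-- Standing assumption on the initial measure: a probability measure on `O` with
`∫ ln(1 + |x|) dm₀* < ∞`. -/
def InitAssumption (O : Set ℝ) (m0 : Measure ℝ) : Prop :=
  IsProbabilityMeasure m0 ∧ m0 Oᶜ = 0 ∧ Integrable (fun x => Real.log (1 + |x|)) m0

/-- Membership in the constraint set `R`: `μ` is a probability measure on
`[0,T] × closure O`, `m ∈ V`, and the Fokker–Planck constraint holds for all
test functions in `C_b^{1,2}`. -/
def MemR (T : ℝ) (O A : Set ℝ) (b σ : ℝ → ℝ → ℝ → ℝ) (m0 : Measure ℝ)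
    (μ : Measure (ℝ × ℝ)) (m : ℝ → Measure (ℝ × ℝ)) : Prop :=
  IsProbabilityMeasure μ ∧ μ ((Set.Icc 0 T ×ˢ closure O)ᶜ) = 0 ∧ MemV T O A m ∧
  ∀ u ut ux uxx : ℝ → ℝ → ℝ, IsCb12 T O u ut ux uxx →
    ∫ p, u p.1 p.2 ∂μ
      = (∫ x, u 0 x ∂m0)
        + ∫ t in Set.Icc 0 T,
            (∫ p, (ut t p.1 + (b t p.1 p.2 * ux t p.1 + σ t p.1 p.2 ^ 2 / 2 * uxx t p.1)) ∂(m t))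

/-- Weak convergence of (finite) measures on `[0,T] × closure O` (tested against
bounded continuous functions). -/
def WeakConv (μn : ℕ → Measure (ℝ × ℝ)) (μ : Measure (ℝ × ℝ)) : Prop :=
  ∀ h : ℝ × ℝ → ℝ, Continuous h → (∃ C : ℝ, ∀ p, |h p| ≤ C) →
    Tendsto (fun n => ∫ p, h p ∂(μn n)) atTop (nhds (∫ p, h p ∂μ))

/-- Convergence `mⁿ → m` in `V`: weak convergence of the associated finite
measures `m_tⁿ(dx,da)dt` on `[0,T] × closure O × A`. -/
def ConvV (T : ℝ) (mn : ℕ → ℝ → Measure (ℝ × ℝ)) (m : ℝ → Measure (ℝ × ℝ)) : Prop :=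
  ∀ h : ℝ → ℝ × ℝ → ℝ, Continuous (fun q : ℝ × ℝ × ℝ => h q.1 q.2) →
    (∃ C : ℝ, ∀ t p, |h t p| ≤ C) →
    Tendsto (fun n => ∫ t in Set.Icc 0 T, (∫ p, h t p ∂(mn n t))) atTop
      (nhds (∫ t in Set.Icc 0 T, (∫ p, h t p ∂(m t))))

/-- The linear-programming reward functional
`Γ(μ, m) = ∫₀^T ∫ f(t,x,a) m_t(dx,da) dt + ∫ g(t,x) μ(dt,dx)`. -/
def LPGamma (T : ℝ) (f : ℝ → ℝ → ℝ → ℝ) (g : ℝ → ℝ → ℝ)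
    (μ : Measure (ℝ × ℝ)) (m : ℝ → Measure (ℝ × ℝ)) : ℝ :=
  (∫ t in Set.Icc 0 T, ∫ p, f t p.1 p.2 ∂(m t)) + ∫ p, g p.1 p.2 ∂μ

/-- Standing assumptions on the reward functions `f` and `g`: `f` measurable,
bounded, upper semicontinuous in `(x,a)` for each `t`; `g` upper semicontinuous
and bounded from above. -/
def RewardAssumption (T : ℝ) (O A : Set ℝ) (f : ℝ → ℝ → ℝ → ℝ) (g : ℝ → ℝ → ℝ) : Prop :=
  Measurable (fun q : ℝ × ℝ × ℝ => f q.1 q.2.1 q.2.2) ∧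
  (∃ C : ℝ, ∀ t x a, |f t x a| ≤ C) ∧
  (∀ t, UpperSemicontinuousOn (fun p : ℝ × ℝ => f t p.1 p.2) (closure O ×ˢ A)) ∧
  UpperSemicontinuousOn (fun p : ℝ × ℝ => g p.1 p.2) (Set.Icc 0 T ×ˢ closure O) ∧
  (∃ C : ℝ, ∀ t x, g t x ≤ C)

/-- Subprobability property of the flow of measures:
if `(μ, m) ∈ R`, then `m_t(Ō × A) ≤ 1` for Lebesgue-almost every `t ∈ [0, T]`. -/
theorem subprobability_of_memR
    (T : ℝ) (hT : 0 < T) (O A : Set ℝ) (hO : IsOpen O) (hA : IsCompact A)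
    (b σ : ℝ → ℝ → ℝ → ℝ) (hbσ : CoefAssumption O A b σ)
    (m0 : Measure ℝ) (hm0 : InitAssumption O m0)
    (μ : Measure (ℝ × ℝ)) (m : ℝ → Measure (ℝ × ℝ))
    (hR : MemR T O A b σ m0 μ m) :
    ∀ᵐ t ∂(volume.restrict (Set.Icc 0 T)), m t (closure O ×ˢ A) ≤ 1 := by
  obtain ⟨hμprob, hμsupp, ⟨hfin, hmsupp, hmeas, hint⟩, hFP⟩ := hR
  haveI := hμprob
  have hMnn : ∀ t, (0:ℝ) ≤ (m t Set.univ).toReal := fun t => ENNReal.toReal_nonneg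
  have hMint : IntegrableOn (fun t => (m t Set.univ).toReal) (Set.Icc 0 T) := hint
  have hmem : ∀ᵐ p ∂μ, p ∈ Set.Icc 0 T ×ˢ closure O := mem_ae_iff.mpr hμsupp
  -- Key inequality: for continuous `ψ` with `0 ≤ ψ ≤ 1`,
  -- `∫_{[0,T]} M t * ψ t dt ≤ ∫_0^T ψ`.
  have key : ∀ ψ : ℝ → ℝ, Continuous ψ → (∀ t, 0 ≤ ψ t) → (∀ t, ψ t ≤ 1) →
      (∫ t in Set.Icc 0 T, (m t Set.univ).toReal * ψ t) ≤ ∫ t in (0:ℝ)..T, ψ t := by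
    intro ψ hψc hψ0 hψ1
    have hψi : ∀ a c : ℝ, IntervalIntegrable ψ volume a c := fun a c =>
      hψc.intervalIntegrable a c
    have hφd : ∀ t : ℝ, HasDerivAt (fun t => ∫ s in (0:ℝ)..t, ψ s) (ψ t) t := fun t =>
      intervalIntegral.integral_hasDerivAt_right (hψi 0 t)
        (hψc.stronglyMeasurableAtFilter _ _) hψc.continuousAt
    have hφc : Continuous (fun t => ∫ s in (0:ℝ)..t, ψ s) :=
      continuous_iff_continuousAt.2 fun t => (hφd t).continuousAt
    have hφmono : Monotone (fun t => ∫ s in (0:ℝ)..t, ψ s) := by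
      intro s t hst
      have h1 : (∫ x in (0:ℝ)..s, ψ x) + ∫ x in s..t, ψ x = ∫ x in (0:ℝ)..t, ψ x :=
        intervalIntegral.integral_add_adjacent_intervals (hψi 0 s) (hψi s t)
      have h2 : 0 ≤ ∫ x in s..t, ψ x :=
        intervalIntegral.integral_nonneg hst (fun x _ => hψ0 x)
      simp only []
      linarith
    have hφ0 : (∫ s in (0:ℝ)..(0:ℝ), ψ s) = 0 := intervalIntegral.integral_same
    have hφbd : ∀ t : ℝ, |∫ s in (0:ℝ)..t, ψ s| ≤ |t| := by
      intro t
      have h := intervalIntegral.norm_integral_le_of_norm_le_const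
        (f := ψ) (C := 1) (a := 0) (b := t) ?_
      · simpa using h
      · intro x _
        rw [Real.norm_eq_abs, abs_le]
        exact ⟨by linarith [hψ0 x], hψ1 x⟩
    have hcb : IsCb12 T O (fun t _ => ∫ s in (0:ℝ)..t, ψ s) (fun t _ => ψ t)
        (fun _ _ => 0) (fun _ _ => 0) := by
      refine ⟨?_, ?_, ?_, ?_, ?_, ?_, ?_, ?_⟩
      · exact (hφc.comp continuous_fst).continuousOn
      · exact (hψc.comp continuous_fst).continuousOn
      · exact continuousOn_const
      · exact continuousOn_const
      · exact fun t ht x hx => (hφd t).hasDerivWithinAt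
      · exact fun t ht x hx => hasDerivWithinAt_const _ _ _
      · exact fun t ht x hx => hasDerivWithinAt_const _ _ _
      · refine ⟨max T 1, fun t ht x hx => ⟨?_, ?_, ?_, ?_⟩⟩
        · refine (hφbd t).trans ?_
          rw [abs_of_nonneg ht.1]
          exact le_max_of_le_left ht.2
        · rw [abs_of_nonneg (hψ0 t)]
          exact (hψ1 t).trans (le_max_right _ _)
        · rw [abs_zero]
          exact le_max_of_le_right zero_le_one
        · rw [abs_zero]
          exact le_max_of_le_right zero_le_one
    have heq := hFP (fun t _ => ∫ s in (0:ℝ)..t, ψ s) (fun t _ => ψ t)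
      (fun _ _ => 0) (fun _ _ => 0) hcb
    simp only [mul_zero, add_zero, zero_add, integral_const, smul_eq_mul, hφ0,
      zero_mul, mul_one, smul_zero] at heq
    have hub : (∫ p : ℝ × ℝ, (∫ s in (0:ℝ)..p.1, ψ s) ∂μ) ≤ ∫ s in (0:ℝ)..T, ψ s := by
      have hi1 : Integrable (fun p : ℝ × ℝ => ∫ s in (0:ℝ)..p.1, ψ s) μ := by
        refine Integrable.mono' (integrable_const (max T 1))
          ((hφc.comp continuous_fst).aestronglyMeasurable) ?_
        filter_upwards [hmem] with p hp
        rw [Real.norm_eq_abs]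
        refine (hφbd p.1).trans ?_
        rw [abs_of_nonneg hp.1.1]
        exact le_max_of_le_left hp.1.2
      have hae : ∀ᵐ p ∂μ, (∫ s in (0:ℝ)..p.1, ψ s) ≤ ∫ s in (0:ℝ)..T, ψ s := by
        filter_upwards [hmem] with p hp
        exact hφmono hp.1.2
      calc (∫ p : ℝ × ℝ, (∫ s in (0:ℝ)..p.1, ψ s) ∂μ)
          ≤ ∫ _p : ℝ × ℝ, (∫ s in (0:ℝ)..T, ψ s) ∂μ :=
            integral_mono_ae hi1 (integrable_const _) hae
        _ = ∫ s in (0:ℝ)..T, ψ s := by simp [measure_univ]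
    calc (∫ t in Set.Icc 0 T, (m t Set.univ).toReal * ψ t)
        = ∫ p : ℝ × ℝ, (∫ s in (0:ℝ)..p.1, ψ s) ∂μ := heq.symm
      _ ≤ ∫ s in (0:ℝ)..T, ψ s := hub
  -- Interval estimate: `∫_{[c,d]} M ≤ d - c` for `[c,d] ⊆ [0,T]`.
  have interval : ∀ c d : ℝ, 0 ≤ c → c ≤ d → d ≤ T →
      (∫ t in Set.Icc c d, (m t Set.univ).toReal) ≤ d - c := by
    intro c d hc hcd hdT
    refine le_of_forall_pos_le_add fun ε hε => ?_
    have hδ : 0 < ε / 2 := by positivity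
    set δ := ε / 2 with hδdef
    set ψ : ℝ → ℝ := fun t => max 0 (1 - δ⁻¹ * Metric.infDist t (Set.Icc c d)) with hψdef
    have hψc : Continuous ψ :=
      continuous_const.max (continuous_const.sub (continuous_const.mul
        (Metric.continuous_infDist_pt _)))
    have hψ0 : ∀ t, 0 ≤ ψ t := fun t => le_max_left _ _
    have hψ1 : ∀ t, ψ t ≤ 1 := by
      intro t
      refine max_le zero_le_one ?_
      have h1 : 0 ≤ Metric.infDist t (Set.Icc c d) := Metric.infDist_nonneg
      have h2 : 0 ≤ δ⁻¹ := inv_nonneg.2 hδ.le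
      nlinarith
    have hψeq1 : ∀ t ∈ Set.Icc c d, ψ t = 1 := by
      intro t ht
      simp [hψdef, Metric.infDist_zero_of_mem ht]
    have hψsupp : ∀ t, t ∉ Set.Icc (c - δ) (d + δ) → ψ t = 0 := by
      intro t ht
      have hd : δ ≤ Metric.infDist t (Set.Icc c d) := by
        by_contra h
        push_neg at h
        obtain ⟨y, hy, hdy⟩ := (Metric.infDist_lt_iff (Set.nonempty_Icc.2 hcd)).1 h
        rw [Real.dist_eq, abs_lt] at hdy
        exact ht ⟨by linarith [hy.1], by linarith [hy.2]⟩
      have hle : 1 - δ⁻¹ * Metric.infDist t (Set.Icc c d) ≤ 0 := by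
        have h1 : δ⁻¹ * δ ≤ δ⁻¹ * Metric.infDist t (Set.Icc c d) :=
          mul_le_mul_of_nonneg_left hd (inv_nonneg.2 hδ.le)
        rw [inv_mul_cancel₀ hδ.ne'] at h1
        linarith
      simp [hψdef, max_eq_left hle]
    have hintψM : IntegrableOn (fun t => (m t Set.univ).toReal * ψ t) (Set.Icc 0 T) := by
      have := hMint.bdd_mul hψc.aestronglyMeasurable.restrict
        (c := 1) (ae_of_all _ fun t => by rw [Real.norm_eq_abs, abs_of_nonneg (hψ0 t)]; exact hψ1 t)
      exact this.congr (ae_of_all _ fun t => mul_comm _ _)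
    have h1 : (∫ t in Set.Icc c d, (m t Set.univ).toReal)
        ≤ ∫ t in Set.Icc 0 T, (m t Set.univ).toReal * ψ t := by
      have he : (∫ t in Set.Icc c d, (m t Set.univ).toReal)
          = ∫ t in Set.Icc c d, (m t Set.univ).toReal * ψ t := by
        refine setIntegral_congr_fun measurableSet_Icc fun t ht => ?_
        rw [hψeq1 t ht, mul_one]
      rw [he]
      refine setIntegral_mono_set hintψM
        (ae_of_all _ fun t => mul_nonneg (hMnn t) (hψ0 t)) (ae_of_all _ ?_)
      intro t ht
      exact ⟨hc.trans ht.1, ht.2.trans hdT⟩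
    have h2 := key ψ hψc hψ0 hψ1
    have h3 : (∫ t in (0:ℝ)..T, ψ t) ≤ d - c + ε := by
      rw [intervalIntegral.integral_of_le hT.le]
      have hle : (∫ t in Set.Ioc 0 T, ψ t)
          ≤ ∫ t in Set.Ioc 0 T, (Set.Icc (c - δ) (d + δ)).indicator (fun _ => (1:ℝ)) t := by
        refine setIntegral_mono_on ((hψc.integrableOn_Icc (a := 0) (b := T)).mono_set
          Set.Ioc_subset_Icc_self) ?_ measurableSet_Ioc ?_
        · exact (integrableOn_const measure_Ioc_lt_top.ne).integrable.indicator
            measurableSet_Icc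
        · intro t ht
          by_cases h : t ∈ Set.Icc (c - δ) (d + δ)
          · rw [Set.indicator_of_mem h]; exact hψ1 t
          · rw [Set.indicator_of_notMem h, hψsupp t h]
      refine hle.trans ?_
      rw [setIntegral_indicator measurableSet_Icc]
      rw [setIntegral_const]
      have hv : (volume (Set.Ioc 0 T ∩ Set.Icc (c - δ) (d + δ))).toReal ≤ d - c + ε := by
        have hm1 : volume (Set.Ioc 0 T ∩ Set.Icc (c - δ) (d + δ))
            ≤ volume (Set.Icc (c - δ) (d + δ)) := measure_mono Set.inter_subset_right
        have hfin2 : volume (Set.Icc (c - δ) (d + δ)) ≠ ⊤ := by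
          rw [Real.volume_Icc]; exact ENNReal.ofReal_ne_top
        have := ENNReal.toReal_mono hfin2 hm1
        refine this.trans ?_
        rw [Real.volume_Icc, ENNReal.toReal_ofReal (by linarith)]
        rw [hδdef]; linarith
      simpa [measureReal_def] using hv
    linarith
  -- Lebesgue differentiation.
  have hNint : Integrable ((Set.Icc (0:ℝ) T).indicator (fun t => (m t Set.univ).toReal)) :=
    hMint.integrable_indicator measurableSet_Icc
  have havg := IsUnifLocDoublingMeasure.ae_tendsto_average
    (μ := (volume : Measure ℝ)) hNint.locallyIntegrable 1
  have hmain : ∀ᵐ t ∂(volume.restrict (Set.Icc 0 T)), (m t Set.univ).toReal ≤ 1 := by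
    have h1 := ae_restrict_of_ae (μ := volume) (s := Set.Icc 0 T) havg
    have h2 : ∀ᵐ t ∂(volume.restrict (Set.Icc 0 T)), t ∈ Set.Ioo 0 T := by
      have hsub : ∀ᵐ t ∂(volume.restrict (Set.Icc 0 T)), t ∈ Set.Icc 0 T :=
        ae_restrict_mem measurableSet_Icc
      have hne : ∀ᵐ t ∂(volume.restrict (Set.Icc 0 T)), t ∉ ({0, T} : Set ℝ) :=
        ae_restrict_of_ae (((Set.finite_singleton T).insert 0).countable.ae_notMem volume)
      filter_upwards [hsub, hne] with t ht htne
      simp only [Set.mem_insert_iff, Set.mem_singleton_iff, not_or] at htne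
      exact ⟨lt_of_le_of_ne ht.1 (Ne.symm htne.1), lt_of_le_of_ne ht.2 htne.2⟩
    filter_upwards [h1, h2] with t htend ht
    have htendsto : Tendsto
        (fun r => ⨍ y in Metric.closedBall t r,
          (Set.Icc (0:ℝ) T).indicator (fun s => (m s Set.univ).toReal) y)
        (𝓝[>] (0:ℝ))
        (𝓝 ((Set.Icc (0:ℝ) T).indicator (fun s => (m s Set.univ).toReal) t)) := by
      refine htend (fun _ => t) id tendsto_id ?_
      filter_upwards [self_mem_nhdsWithin] with r hr
      simp only [one_mul]
      exact Metric.mem_closedBall_self (le_of_lt hr)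
    have hNt : (Set.Icc (0:ℝ) T).indicator (fun s => (m s Set.univ).toReal) t ≤ 1 := by
      refine le_of_tendsto htendsto ?_
      have hev : ∀ᶠ r in 𝓝[>] (0:ℝ), r ∈ Set.Ioo 0 (min t (T - t)) :=
        Filter.eventually_of_mem
          (Ioo_mem_nhdsGT_of_mem ⟨le_refl 0, lt_min ht.1 (by linarith [ht.2])⟩)
          (fun r hr => hr)
      filter_upwards [hev] with r hr
      have hrt : 0 < r := hr.1
      obtain ⟨hr1, hr2⟩ := lt_min_iff.1 hr.2
      have hball : Metric.closedBall t r = Set.Icc (t - r) (t + r) := Real.closedBall_eq_Icc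
      have hsub2 : Set.Icc (t - r) (t + r) ⊆ Set.Icc 0 T := fun x hx =>
        ⟨by linarith [hx.1], by linarith [hx.2]⟩
      rw [setAverage_eq, hball]
      have hInt : (∫ y in Set.Icc (t - r) (t + r),
          (Set.Icc (0:ℝ) T).indicator (fun s => (m s Set.univ).toReal) y)
          = ∫ y in Set.Icc (t - r) (t + r), (m y Set.univ).toReal := by
        refine setIntegral_congr_fun measurableSet_Icc fun y hy => ?_
        exact Set.indicator_of_mem (hsub2 hy) _
      have hIle : (∫ y in Set.Icc (t - r) (t + r), (m y Set.univ).toReal) ≤ 2 * r := by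
        have := interval (t - r) (t + r) (by linarith) (by linarith) (by linarith)
        linarith
      rw [hInt]
      have hvol : (volume (Set.Icc (t - r) (t + r))).toReal = 2 * r := by
        rw [Real.volume_Icc, ENNReal.toReal_ofReal (by linarith)]
        ring
      rw [smul_eq_mul, measureReal_def, hvol]
      have hIpos : 0 ≤ ∫ y in Set.Icc (t - r) (t + r), (m y Set.univ).toReal :=
        setIntegral_nonneg measurableSet_Icc fun y _ => hMnn y
      calc (2 * r)⁻¹ * ∫ y in Set.Icc (t - r) (t + r), (m y Set.univ).toReal
          ≤ (2 * r)⁻¹ * (2 * r) :=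
            mul_le_mul_of_nonneg_left hIle (inv_nonneg.2 (by linarith))
        _ = 1 := by field_simp
    rwa [Set.indicator_of_mem (Set.mem_Icc.2 ⟨ht.1.le, ht.2.le⟩)] at hNt
  filter_upwards [hmain] with t ht
  have h1 : m t (closure O ×ˢ A) ≤ m t Set.univ := measure_mono (Set.subset_univ _)
  have h2 : m t Set.univ ≤ 1 := by
    rw [← ENNReal.ofReal_toReal (hfin t).ne]
    calc ENNReal.ofReal ((m t Set.univ).toReal) ≤ ENNReal.ofReal 1 :=
        ENNReal.ofReal_le_ofReal ht
      _ = 1 := ENNReal.ofReal_one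
  exact h1.trans h2
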